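/- If u and v are open twins in a graph G (i.e., N(u) = N(v)), then γtg(G) = γtg(G|u) = γtg(G|v). -/

import Mathlib

open scoped Classical

/-- The value of the total domination game on `G` with the set `D` of vertices
already totally dominated; `dTurn = true` means Dominator (minimizer) to move,
`dTurn = false` means Staller (maximizer) to move. Each move must be a vertex
totally dominating at least one vertex not in `D`; the value is the number of
moves played until no legal move remains, under optimal play. -/
noncomputable def tgVal {V : Type*} [Fintype V] (G : SimpleGraph V)
    (dTurn : Bool) (D : Finset V) : ℕ :=
  if h : (Finset.univ.filter fun v => ∃ u, G.Adj v u ∧ u ∉ D).Nonempty then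
    1 + (if dTurn then
          ((Finset.univ.filter fun v => ∃ u, G.Adj v u ∧ u ∉ D).attach).inf'
            (Finset.attach_nonempty_iff.mpr h)
            (fun v => tgVal G false (D ∪ G.neighborFinset v.1))
        else
          ((Finset.univ.filter fun v => ∃ u, G.Adj v u ∧ u ∉ D).attach).sup'
            (Finset.attach_nonempty_iff.mpr h)
            (fun v => tgVal G true (D ∪ G.neighborFinset v.1)))
  else 0
termination_by (Finset.univ \ D).card
decreasing_by
  all_goals
  · obtain ⟨v, hv⟩ := v
    simp only [Finset.mem_filter, Finset.mem_univ, true_and] at hv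
    obtain ⟨u, hadj, hu⟩ := hv
    apply Finset.card_lt_card
    rw [Finset.ssubset_iff_of_subset
      (Finset.sdiff_subset_sdiff (subset_refl _) Finset.subset_union_left)]
    exact ⟨u, by simp [hu], by simp [hadj]⟩

/-- The game total domination number (Dominator starts). -/
noncomputable def gammaTG {V : Type*} [Fintype V] (G : SimpleGraph V) : ℕ :=
  tgVal G true ∅

/-- The Staller-start game total domination number. -/
noncomputable def gammaTG' {V : Type*} [Fintype V] (G : SimpleGraph V) : ℕ :=
  tgVal G false ∅

/-- The game total domination number of `G|S` (vertices of `S` already totally dominated). -/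
noncomputable def gammaTGSub {V : Type*} [Fintype V] (G : SimpleGraph V) (S : Finset V) : ℕ :=
  tgVal G true S

/-- `G` is total domination game critical. -/
def IsTGCritical {V : Type*} [Fintype V] (G : SimpleGraph V) : Prop :=
  ∀ v : V, gammaTGSub G {v} < gammaTG G

/-- `G` is `k`-`γtg`-critical. -/
def IsKTGCritical {V : Type*} [Fintype V] (k : ℕ) (G : SimpleGraph V) : Prop :=
  gammaTG G = k ∧ IsTGCritical G

lemma inf'_attach' {α β : Type*} [SemilatticeInf β] (s : Finset α) (h : s.Nonempty)
    (f : α → β) :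
    s.attach.inf' (Finset.attach_nonempty_iff.mpr h) (fun x => f x.1) = s.inf' h f := by
  apply le_antisymm
  · exact Finset.le_inf' _ _ (fun b hb => Finset.inf'_le _ (Finset.mem_attach s ⟨b, hb⟩))
  · exact Finset.le_inf' _ _ (fun x _ => Finset.inf'_le _ x.2)

lemma sup'_attach' {α β : Type*} [SemilatticeSup β] (s : Finset α) (h : s.Nonempty)
    (f : α → β) :
    s.attach.sup' (Finset.attach_nonempty_iff.mpr h) (fun x => f x.1) = s.sup' h f := by
  apply le_antisymm
  · exact Finset.sup'_le _ _ (fun x _ => Finset.le_sup' _ x.2)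
  · exact Finset.sup'_le _ _ (fun b hb =>
      Finset.le_sup' (fun x : {x // x ∈ s} => f x.1) (Finset.mem_attach s ⟨b, hb⟩))

lemma tgVal_eq {V : Type*} [Fintype V] (G : SimpleGraph V) (t : Bool) (D : Finset V) :
    tgVal G t D =
      if h : (Finset.univ.filter fun v => ∃ u, G.Adj v u ∧ u ∉ D).Nonempty then
        1 + (if t then
              (Finset.univ.filter fun v => ∃ u, G.Adj v u ∧ u ∉ D).inf' h
                (fun v => tgVal G false (D ∪ G.neighborFinset v))
            else
              (Finset.univ.filter fun v => ∃ u, G.Adj v u ∧ u ∉ D).sup' h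
                (fun v => tgVal G true (D ∪ G.neighborFinset v)))
      else 0 := by
  rw [tgVal]
  by_cases h : (Finset.univ.filter fun v => ∃ u, G.Adj v u ∧ u ∉ D).Nonempty
  · rw [dif_pos h, dif_pos h]
    congr 1
    split
    · exact inf'_attach' _ h (fun w => tgVal G false (D ∪ G.neighborFinset w))
    · exact sup'_attach' _ h (fun w => tgVal G true (D ∪ G.neighborFinset w))
  · rw [dif_neg h, dif_neg h]

lemma twin_adj {V : Type*} (G : SimpleGraph V) {u v : V}
    (htwin : G.neighborSet u = G.neighborSet v) (w : V) :
    G.Adj w u ↔ G.Adj w v := by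
  have h := Set.ext_iff.mp htwin w
  simp only [SimpleGraph.mem_neighborSet] at h
  constructor
  · intro hw; exact (h.mp hw.symm).symm
  · intro hw; exact (h.mpr hw.symm).symm

lemma tg_key {V : Type*} [Fintype V] (G : SimpleGraph V) {u v : V} (huv : u ≠ v)
    (htwin : G.neighborSet u = G.neighborSet v) :
    ∀ n : ℕ, ∀ D : Finset V, (Finset.univ \ D).card = n → v ∉ D → ∀ t,
      tgVal G t (D ∪ {u}) = tgVal G t D := by
  intro n
  induction n using Nat.strong_induction_on with
  | _ n IH =>
    intro D hcard hv t
    have hfilter : (Finset.univ.filter fun w => ∃ x, G.Adj w x ∧ x ∉ D ∪ {u})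
        = Finset.univ.filter fun w => ∃ x, G.Adj w x ∧ x ∉ D := by
      ext w
      simp only [Finset.mem_filter, Finset.mem_univ, true_and, Finset.mem_union,
        Finset.mem_singleton]
      constructor
      · rintro ⟨x, hadj, hx⟩
        exact ⟨x, hadj, fun h => hx (Or.inl h)⟩
      · rintro ⟨x, hadj, hx⟩
        by_cases hxu : x = u
        · subst hxu
          refine ⟨v, (twin_adj G htwin w).mp hadj, ?_⟩
          rintro (h | h)
          · exact hv h
          · exact huv h.symm
        · exact ⟨x, hadj, by tauto⟩
    have hval : ∀ w ∈ (Finset.univ.filter fun w => ∃ x, G.Adj w x ∧ x ∉ D), ∀ t',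
        tgVal G t' ((D ∪ {u}) ∪ G.neighborFinset w)
          = tgVal G t' (D ∪ G.neighborFinset w) := by
      intro w hw t'
      simp only [Finset.mem_filter, Finset.mem_univ, true_and] at hw
      obtain ⟨x, hadj, hx⟩ := hw
      have heq : (D ∪ {u}) ∪ G.neighborFinset w = (D ∪ G.neighborFinset w) ∪ {u} := by
        ext y; simp [Finset.mem_union]
      rw [heq]
      by_cases hvw : v ∈ G.neighborFinset w
      · have huw : u ∈ G.neighborFinset w := by
          rw [SimpleGraph.mem_neighborFinset] at hvw ⊢
          exact (twin_adj G htwin w).mpr hvw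
        rw [Finset.union_eq_left.mpr (by simp [huw])]
      · have hlt : (Finset.univ \ (D ∪ G.neighborFinset w)).card < n := by
          rw [← hcard]
          apply Finset.card_lt_card
          rw [Finset.ssubset_iff_of_subset
            (Finset.sdiff_subset_sdiff (subset_refl _) Finset.subset_union_left)]
          exact ⟨x, by simp [hx], by simp [hadj]⟩
        refine IH _ hlt _ rfl ?_ t'
        simp only [Finset.mem_union]
        rintro (h | h)
        · exact hv h
        · exact hvw h
    rw [tgVal_eq, tgVal_eq, hfilter]
    by_cases hne : (Finset.univ.filter fun w => ∃ x, G.Adj w x ∧ x ∉ D).Nonempty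
    · rw [dif_pos hne, dif_pos hne]
      congr 1
      cases t with
      | true =>
        rw [if_pos rfl, if_pos rfl]
        exact Finset.inf'_congr hne rfl (fun w hw => hval w hw false)
      | false =>
        rw [if_neg Bool.false_ne_true, if_neg Bool.false_ne_true]
        exact Finset.sup'_congr hne rfl (fun w hw => hval w hw true)
    · rw [dif_neg hne, dif_neg hne]

theorem stmt8 {V : Type*} [Fintype V] (G : SimpleGraph V) (u v : V) (huv : u ≠ v)
    (htwin : G.neighborSet u = G.neighborSet v) :
    gammaTG G = gammaTGSub G {u} ∧ gammaTGSub G {u} = gammaTGSub G {v} := by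
  have h1 : gammaTG G = gammaTGSub G {u} := by
    have := tg_key G huv htwin _ ∅ rfl (Finset.notMem_empty v) true
    simpa [gammaTG, gammaTGSub] using this.symm
  have h2 : gammaTG G = gammaTGSub G {v} := by
    have := tg_key G huv.symm htwin.symm _ ∅ rfl (Finset.notMem_empty u) true
    simpa [gammaTG, gammaTGSub] using this.symm
  exact ⟨h1, h1.symm.trans h2⟩
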